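/- Let F be a field of characteristic 2. For every permitted coloring of ∂Δ⁵, the cocycle sum of the polynomial c(a,b,c,d,e) = bce²+b²e²+b²de+ac²e+b³e+bd³+ad³+abd²+a²d²+a²cd+b³d vanishes: Σ_{i=1}^{6} (−1)^{i−1} c[u_i] = 0 in F, where u_i = {1,…,6}∖{i}. -/

import Mathlib

open Finset

/-- The 5×5 integer matrix 𝓡. -/
def Rmat : Matrix (Fin 5) (Fin 5) ℤ :=
  !![0, -2, 1, 1, -2;
     0, -1, 0, 1, -1;
     -1, 2, -2, 0, 1;
     -1, 3, -2, -1, 2;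
     0, 1, -1, 0, 0]

/-- The table of 2-columns ψ for a tetrahedron with (sorted) vertices indexed by `Fin 4`:
for indices a < c, the value of ψ on the edge joining the a-th and the c-th vertex. -/
def psiPair (F : Type*) [Field F] (a c : Fin 4) : F × F :=
  if a = 0 ∧ c = 1 then (-1, 1)
  else if a = 0 ∧ c = 2 then (2, -1)
  else if a = 0 ∧ c = 3 then (-1, 0)
  else if a = 1 ∧ c = 2 then (-1, 0)
  else if a = 1 ∧ c = 3 then (0, 1)
  else if a = 2 ∧ c = 3 then (1, -1)
  else (0, 0)

/-- ψ_{t,b} for a tetrahedron `t` (a 4-element subset of the vertex set) and an edge `b`: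
zero when `b ⊄ t`, and the corresponding table value otherwise. -/
def psi (F : Type*) [Field F] {V : Type*} [LinearOrder V]
    (t : Finset V) (ht : t.card = 4) (b : Finset V) : F × F :=
  ∑ a : Fin 4, ∑ c : Fin 4,
    if a < c ∧ b = {t.orderEmbOfFin ht a, t.orderEmbOfFin ht c} then psiPair F a c else 0

/-- The i-th vertex (in increasing order) of a pentachoron `u`. -/
def pentVert {V : Type*} [LinearOrder V] (u : Finset V) (hu : u.card = 5) (i : Fin 5) : V :=
  u.orderEmbOfFin hu i

/-- The i-th tetrahedral 3-face of a pentachoron `u`: it omits the i-th vertex. -/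
def pentFace {V : Type*} [LinearOrder V] (u : Finset V) (hu : u.card = 5) (i : Fin 5) :
    Finset V :=
  u.erase (pentVert u hu i)

/-- A coloring χ (assigning a pair (x_t, y_t) ∈ F × F to each tetrahedron) is permitted on a
pentachoron `u` if the column of y-values on its five 3-faces equals 𝓡 applied to the column
of x-values. -/
def PermittedOn {V : Type*} [LinearOrder V] {F : Type*} [Field F]
    (u : Finset V) (hu : u.card = 5) (χ : Finset V → F × F) : Prop :=
  ∀ i : Fin 5,
    (χ (pentFace u hu i)).2 = ∑ j : Fin 5, (Rmat i j : F) * (χ (pentFace u hu j)).1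

/-- The coloring assigning ψ_{t,b} to every tetrahedron `t`. -/
def Xi (F : Type*) [Field F] {V : Type*} [LinearOrder V] (b : Finset V) :
    Finset V → F × F :=
  fun t => if ht : t.card = 4 then psi F t ht b else 0


/-- A coloring of ∂Δ⁵ (vertex set `Fin 6`) is permitted if it is permitted on each of the six
pentachora, i.e., on every 5-element subset of the vertices. -/
def Permitted {F : Type*} [Field F] (χ : Finset (Fin 6) → F × F) : Prop :=
  ∀ (u : Finset (Fin 6)) (hu : u.card = 5), PermittedOn u hu χ

lemma card_erase6 (i : Fin 6) : ((univ : Finset (Fin 6)).erase i).card = 5 := by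
  rw [Finset.card_erase_of_mem (mem_univ i)]
  simp

/-- `xv F χ i j` is the x-value of the coloring χ on the j-th 3-face (the one omitting the
j-th smallest vertex) of the pentachoron u_i = {1,…,6} ∖ {i} of ∂Δ⁵; for the pentachoron
u_i this gives the substitutions a = xv i 0, b = xv i 1, c = xv i 2, d = xv i 3,
e = xv i 4. -/
def xv (F : Type*) [Field F] (χ : Finset (Fin 6) → F × F) (i : Fin 6) (j : Fin 5) : F :=
  (χ (pentFace ((univ : Finset (Fin 6)).erase i) (card_erase6 i) j)).1


def gfun (i : Fin 6) (j : Fin 5) : Fin 6 :=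
  if (j : ℕ) < (i : ℕ) then ⟨j, by omega⟩ else ⟨(j : ℕ) + 1, by omega⟩

lemma gfun_mem : ∀ (i : Fin 6) (x : Fin 5), gfun i x ∈ (univ : Finset (Fin 6)).erase i := by decide

lemma gfun_mono : ∀ (i : Fin 6) (a b : Fin 5), a < b → gfun i a < gfun i b := by decide

lemma hpv (i : Fin 6) (j : Fin 5) :
    pentVert ((univ : Finset (Fin 6)).erase i) (card_erase6 i) j = gfun i j :=
  (congrFun (Finset.orderEmbOfFin_unique (card_erase6 i) (gfun_mem i) (fun _ _ h => gfun_mono i _ _ h)) j).symm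

lemma hpf (i : Fin 6) (j : Fin 5) :
    pentFace ((univ : Finset (Fin 6)).erase i) (card_erase6 i) j = ((univ : Finset (Fin 6)).erase i).erase (gfun i j) := by
  rw [pentFace, hpv]

lemma Rm_0_0 : Rmat 0 0 = 0 := by decide
lemma Rm_0_1 : Rmat 0 1 = -2 := by decide
lemma Rm_0_2 : Rmat 0 2 = 1 := by decide
lemma Rm_0_3 : Rmat 0 3 = 1 := by decide
lemma Rm_0_4 : Rmat 0 4 = -2 := by decide
lemma Rm_1_0 : Rmat 1 0 = 0 := by decide
lemma Rm_1_1 : Rmat 1 1 = -1 := by decide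
lemma Rm_1_2 : Rmat 1 2 = 0 := by decide
lemma Rm_1_3 : Rmat 1 3 = 1 := by decide
lemma Rm_1_4 : Rmat 1 4 = -1 := by decide
lemma Rm_2_0 : Rmat 2 0 = -1 := by decide
lemma Rm_2_1 : Rmat 2 1 = 2 := by decide
lemma Rm_2_2 : Rmat 2 2 = -2 := by decide
lemma Rm_2_3 : Rmat 2 3 = 0 := by decide
lemma Rm_2_4 : Rmat 2 4 = 1 := by decide
lemma Rm_3_0 : Rmat 3 0 = -1 := by decide
lemma Rm_3_1 : Rmat 3 1 = 3 := by decide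
lemma Rm_3_2 : Rmat 3 2 = -2 := by decide
lemma Rm_3_3 : Rmat 3 3 = -1 := by decide
lemma Rm_3_4 : Rmat 3 4 = 2 := by decide
lemma Rm_4_0 : Rmat 4 0 = 0 := by decide
lemma Rm_4_1 : Rmat 4 1 = 1 := by decide
lemma Rm_4_2 : Rmat 4 2 = -1 := by decide
lemma Rm_4_3 : Rmat 4 3 = 0 := by decide
lemma Rm_4_4 : Rmat 4 4 = 0 := by decide

lemma fL_0_0 : pentFace ((univ : Finset (Fin 6)).erase 0) (card_erase6 0) 0 = ({2,3,4,5} : Finset (Fin 6)) := by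
  rw [hpf]; decide

lemma fL_0_1 : pentFace ((univ : Finset (Fin 6)).erase 0) (card_erase6 0) 1 = ({1,3,4,5} : Finset (Fin 6)) := by
  rw [hpf]; decide

lemma fL_0_2 : pentFace ((univ : Finset (Fin 6)).erase 0) (card_erase6 0) 2 = ({1,2,4,5} : Finset (Fin 6)) := by
  rw [hpf]; decide

lemma fL_0_3 : pentFace ((univ : Finset (Fin 6)).erase 0) (card_erase6 0) 3 = ({1,2,3,5} : Finset (Fin 6)) := by
  rw [hpf]; decide

lemma fL_0_4 : pentFace ((univ : Finset (Fin 6)).erase 0) (card_erase6 0) 4 = ({1,2,3,4} : Finset (Fin 6)) := by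
  rw [hpf]; decide

lemma fL_1_0 : pentFace ((univ : Finset (Fin 6)).erase 1) (card_erase6 1) 0 = ({2,3,4,5} : Finset (Fin 6)) := by
  rw [hpf]; decide

lemma fL_1_1 : pentFace ((univ : Finset (Fin 6)).erase 1) (card_erase6 1) 1 = ({0,3,4,5} : Finset (Fin 6)) := by
  rw [hpf]; decide

lemma fL_1_2 : pentFace ((univ : Finset (Fin 6)).erase 1) (card_erase6 1) 2 = ({0,2,4,5} : Finset (Fin 6)) := by
  rw [hpf]; decide

lemma fL_1_3 : pentFace ((univ : Finset (Fin 6)).erase 1) (card_erase6 1) 3 = ({0,2,3,5} : Finset (Fin 6)) := by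
  rw [hpf]; decide

lemma fL_1_4 : pentFace ((univ : Finset (Fin 6)).erase 1) (card_erase6 1) 4 = ({0,2,3,4} : Finset (Fin 6)) := by
  rw [hpf]; decide

lemma fL_2_0 : pentFace ((univ : Finset (Fin 6)).erase 2) (card_erase6 2) 0 = ({1,3,4,5} : Finset (Fin 6)) := by
  rw [hpf]; decide

lemma fL_2_1 : pentFace ((univ : Finset (Fin 6)).erase 2) (card_erase6 2) 1 = ({0,3,4,5} : Finset (Fin 6)) := by
  rw [hpf]; decide

lemma fL_2_2 : pentFace ((univ : Finset (Fin 6)).erase 2) (card_erase6 2) 2 = ({0,1,4,5} : Finset (Fin 6)) := by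
  rw [hpf]; decide

lemma fL_2_3 : pentFace ((univ : Finset (Fin 6)).erase 2) (card_erase6 2) 3 = ({0,1,3,5} : Finset (Fin 6)) := by
  rw [hpf]; decide

lemma fL_2_4 : pentFace ((univ : Finset (Fin 6)).erase 2) (card_erase6 2) 4 = ({0,1,3,4} : Finset (Fin 6)) := by
  rw [hpf]; decide

lemma fL_3_0 : pentFace ((univ : Finset (Fin 6)).erase 3) (card_erase6 3) 0 = ({1,2,4,5} : Finset (Fin 6)) := by
  rw [hpf]; decide

lemma fL_3_1 : pentFace ((univ : Finset (Fin 6)).erase 3) (card_erase6 3) 1 = ({0,2,4,5} : Finset (Fin 6)) := by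
  rw [hpf]; decide

lemma fL_3_2 : pentFace ((univ : Finset (Fin 6)).erase 3) (card_erase6 3) 2 = ({0,1,4,5} : Finset (Fin 6)) := by
  rw [hpf]; decide

lemma fL_3_3 : pentFace ((univ : Finset (Fin 6)).erase 3) (card_erase6 3) 3 = ({0,1,2,5} : Finset (Fin 6)) := by
  rw [hpf]; decide

lemma fL_3_4 : pentFace ((univ : Finset (Fin 6)).erase 3) (card_erase6 3) 4 = ({0,1,2,4} : Finset (Fin 6)) := by
  rw [hpf]; decide

lemma fL_4_0 : pentFace ((univ : Finset (Fin 6)).erase 4) (card_erase6 4) 0 = ({1,2,3,5} : Finset (Fin 6)) := by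
  rw [hpf]; decide

lemma fL_4_1 : pentFace ((univ : Finset (Fin 6)).erase 4) (card_erase6 4) 1 = ({0,2,3,5} : Finset (Fin 6)) := by
  rw [hpf]; decide

lemma fL_4_2 : pentFace ((univ : Finset (Fin 6)).erase 4) (card_erase6 4) 2 = ({0,1,3,5} : Finset (Fin 6)) := by
  rw [hpf]; decide

lemma fL_4_3 : pentFace ((univ : Finset (Fin 6)).erase 4) (card_erase6 4) 3 = ({0,1,2,5} : Finset (Fin 6)) := by
  rw [hpf]; decide

lemma fL_4_4 : pentFace ((univ : Finset (Fin 6)).erase 4) (card_erase6 4) 4 = ({0,1,2,3} : Finset (Fin 6)) := by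
  rw [hpf]; decide

lemma fL_5_0 : pentFace ((univ : Finset (Fin 6)).erase 5) (card_erase6 5) 0 = ({1,2,3,4} : Finset (Fin 6)) := by
  rw [hpf]; decide

lemma fL_5_1 : pentFace ((univ : Finset (Fin 6)).erase 5) (card_erase6 5) 1 = ({0,2,3,4} : Finset (Fin 6)) := by
  rw [hpf]; decide

lemma fL_5_2 : pentFace ((univ : Finset (Fin 6)).erase 5) (card_erase6 5) 2 = ({0,1,3,4} : Finset (Fin 6)) := by
  rw [hpf]; decide

lemma fL_5_3 : pentFace ((univ : Finset (Fin 6)).erase 5) (card_erase6 5) 3 = ({0,1,2,4} : Finset (Fin 6)) := by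
  rw [hpf]; decide

lemma fL_5_4 : pentFace ((univ : Finset (Fin 6)).erase 5) (card_erase6 5) 4 = ({0,1,2,3} : Finset (Fin 6)) := by
  rw [hpf]; decide

set_option maxHeartbeats 8000000 in
set_option maxRecDepth 100000 in
/-- char 2: the cocycle sum of bce²+b²e²+b²de+ac²e+b³e+bd³+ad³+abd²+a²d²+a²cd+b³d over a permitted coloring of ∂Δ⁵ vanishes. -/
theorem statement14 (F : Type*) [Field F] [CharP F 2]
    (χ : Finset (Fin 6) → F × F) (hχ : Permitted χ) :
    ∑ i : Fin 6, (-1 : F) ^ (i : ℕ) *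
      (let a := xv F χ i 0; let b := xv F χ i 1; let c := xv F χ i 2;
       let d := xv F χ i 3; let e := xv F χ i 4;
       b*c*e^2 + b^2*e^2 + b^2*d*e + a*c^2*e + b^3*e + b*d^3 + a*d^3 + a*b*d^2 + a^2*d^2 + a^2*c*d + b^3*d) = 0 := by
  have h2 : (2 : F) = 0 := CharTwo.two_eq_zero
  have hm1 : (-1 : F) = 1 := CharTwo.neg_eq 1
  have h_1_3 := hχ ((univ : Finset (Fin 6)).erase 1) (card_erase6 1) 3
  simp only [Fin.sum_univ_five, Rm_0_0, Rm_0_1, Rm_0_2, Rm_0_3, Rm_0_4, Rm_1_0, Rm_1_1, Rm_1_2, Rm_1_3, Rm_1_4, Rm_2_0, Rm_2_1, Rm_2_2, Rm_2_3, Rm_2_4, Rm_3_0, Rm_3_1, Rm_3_2, Rm_3_3, Rm_3_4, Rm_4_0, Rm_4_1, Rm_4_2, Rm_4_3, Rm_4_4, fL_1_0, fL_1_1, fL_1_2, fL_1_3, fL_1_4] at h_1_3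
  push_cast at h_1_3
  have h_2_3 := hχ ((univ : Finset (Fin 6)).erase 2) (card_erase6 2) 3
  simp only [Fin.sum_univ_five, Rm_0_0, Rm_0_1, Rm_0_2, Rm_0_3, Rm_0_4, Rm_1_0, Rm_1_1, Rm_1_2, Rm_1_3, Rm_1_4, Rm_2_0, Rm_2_1, Rm_2_2, Rm_2_3, Rm_2_4, Rm_3_0, Rm_3_1, Rm_3_2, Rm_3_3, Rm_3_4, Rm_4_0, Rm_4_1, Rm_4_2, Rm_4_3, Rm_4_4, fL_2_0, fL_2_1, fL_2_2, fL_2_3, fL_2_4] at h_2_3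
  push_cast at h_2_3
  have h_2_4 := hχ ((univ : Finset (Fin 6)).erase 2) (card_erase6 2) 4
  simp only [Fin.sum_univ_five, Rm_0_0, Rm_0_1, Rm_0_2, Rm_0_3, Rm_0_4, Rm_1_0, Rm_1_1, Rm_1_2, Rm_1_3, Rm_1_4, Rm_2_0, Rm_2_1, Rm_2_2, Rm_2_3, Rm_2_4, Rm_3_0, Rm_3_1, Rm_3_2, Rm_3_3, Rm_3_4, Rm_4_0, Rm_4_1, Rm_4_2, Rm_4_3, Rm_4_4, fL_2_0, fL_2_1, fL_2_2, fL_2_3, fL_2_4] at h_2_4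
  push_cast at h_2_4
  have h_3_3 := hχ ((univ : Finset (Fin 6)).erase 3) (card_erase6 3) 3
  simp only [Fin.sum_univ_five, Rm_0_0, Rm_0_1, Rm_0_2, Rm_0_3, Rm_0_4, Rm_1_0, Rm_1_1, Rm_1_2, Rm_1_3, Rm_1_4, Rm_2_0, Rm_2_1, Rm_2_2, Rm_2_3, Rm_2_4, Rm_3_0, Rm_3_1, Rm_3_2, Rm_3_3, Rm_3_4, Rm_4_0, Rm_4_1, Rm_4_2, Rm_4_3, Rm_4_4, fL_3_0, fL_3_1, fL_3_2, fL_3_3, fL_3_4] at h_3_3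
  push_cast at h_3_3
  have h_3_4 := hχ ((univ : Finset (Fin 6)).erase 3) (card_erase6 3) 4
  simp only [Fin.sum_univ_five, Rm_0_0, Rm_0_1, Rm_0_2, Rm_0_3, Rm_0_4, Rm_1_0, Rm_1_1, Rm_1_2, Rm_1_3, Rm_1_4, Rm_2_0, Rm_2_1, Rm_2_2, Rm_2_3, Rm_2_4, Rm_3_0, Rm_3_1, Rm_3_2, Rm_3_3, Rm_3_4, Rm_4_0, Rm_4_1, Rm_4_2, Rm_4_3, Rm_4_4, fL_3_0, fL_3_1, fL_3_2, fL_3_3, fL_3_4] at h_3_4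
  push_cast at h_3_4
  have h_4_1 := hχ ((univ : Finset (Fin 6)).erase 4) (card_erase6 4) 1
  simp only [Fin.sum_univ_five, Rm_0_0, Rm_0_1, Rm_0_2, Rm_0_3, Rm_0_4, Rm_1_0, Rm_1_1, Rm_1_2, Rm_1_3, Rm_1_4, Rm_2_0, Rm_2_1, Rm_2_2, Rm_2_3, Rm_2_4, Rm_3_0, Rm_3_1, Rm_3_2, Rm_3_3, Rm_3_4, Rm_4_0, Rm_4_1, Rm_4_2, Rm_4_3, Rm_4_4, fL_4_0, fL_4_1, fL_4_2, fL_4_3, fL_4_4] at h_4_1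
  push_cast at h_4_1
  have h_4_2 := hχ ((univ : Finset (Fin 6)).erase 4) (card_erase6 4) 2
  simp only [Fin.sum_univ_five, Rm_0_0, Rm_0_1, Rm_0_2, Rm_0_3, Rm_0_4, Rm_1_0, Rm_1_1, Rm_1_2, Rm_1_3, Rm_1_4, Rm_2_0, Rm_2_1, Rm_2_2, Rm_2_3, Rm_2_4, Rm_3_0, Rm_3_1, Rm_3_2, Rm_3_3, Rm_3_4, Rm_4_0, Rm_4_1, Rm_4_2, Rm_4_3, Rm_4_4, fL_4_0, fL_4_1, fL_4_2, fL_4_3, fL_4_4] at h_4_2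
  push_cast at h_4_2
  have h_4_3 := hχ ((univ : Finset (Fin 6)).erase 4) (card_erase6 4) 3
  simp only [Fin.sum_univ_five, Rm_0_0, Rm_0_1, Rm_0_2, Rm_0_3, Rm_0_4, Rm_1_0, Rm_1_1, Rm_1_2, Rm_1_3, Rm_1_4, Rm_2_0, Rm_2_1, Rm_2_2, Rm_2_3, Rm_2_4, Rm_3_0, Rm_3_1, Rm_3_2, Rm_3_3, Rm_3_4, Rm_4_0, Rm_4_1, Rm_4_2, Rm_4_3, Rm_4_4, fL_4_0, fL_4_1, fL_4_2, fL_4_3, fL_4_4] at h_4_3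
  push_cast at h_4_3
  have h_4_4 := hχ ((univ : Finset (Fin 6)).erase 4) (card_erase6 4) 4
  simp only [Fin.sum_univ_five, Rm_0_0, Rm_0_1, Rm_0_2, Rm_0_3, Rm_0_4, Rm_1_0, Rm_1_1, Rm_1_2, Rm_1_3, Rm_1_4, Rm_2_0, Rm_2_1, Rm_2_2, Rm_2_3, Rm_2_4, Rm_3_0, Rm_3_1, Rm_3_2, Rm_3_3, Rm_3_4, Rm_4_0, Rm_4_1, Rm_4_2, Rm_4_3, Rm_4_4, fL_4_0, fL_4_1, fL_4_2, fL_4_3, fL_4_4] at h_4_4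
  push_cast at h_4_4
  have h_5_2 := hχ ((univ : Finset (Fin 6)).erase 5) (card_erase6 5) 2
  simp only [Fin.sum_univ_five, Rm_0_0, Rm_0_1, Rm_0_2, Rm_0_3, Rm_0_4, Rm_1_0, Rm_1_1, Rm_1_2, Rm_1_3, Rm_1_4, Rm_2_0, Rm_2_1, Rm_2_2, Rm_2_3, Rm_2_4, Rm_3_0, Rm_3_1, Rm_3_2, Rm_3_3, Rm_3_4, Rm_4_0, Rm_4_1, Rm_4_2, Rm_4_3, Rm_4_4, fL_5_0, fL_5_1, fL_5_2, fL_5_3, fL_5_4] at h_5_2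
  push_cast at h_5_2
  have h_5_3 := hχ ((univ : Finset (Fin 6)).erase 5) (card_erase6 5) 3
  simp only [Fin.sum_univ_five, Rm_0_0, Rm_0_1, Rm_0_2, Rm_0_3, Rm_0_4, Rm_1_0, Rm_1_1, Rm_1_2, Rm_1_3, Rm_1_4, Rm_2_0, Rm_2_1, Rm_2_2, Rm_2_3, Rm_2_4, Rm_3_0, Rm_3_1, Rm_3_2, Rm_3_3, Rm_3_4, Rm_4_0, Rm_4_1, Rm_4_2, Rm_4_3, Rm_4_4, fL_5_0, fL_5_1, fL_5_2, fL_5_3, fL_5_4] at h_5_3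
  push_cast at h_5_3
  have h_5_4 := hχ ((univ : Finset (Fin 6)).erase 5) (card_erase6 5) 4
  simp only [Fin.sum_univ_five, Rm_0_0, Rm_0_1, Rm_0_2, Rm_0_3, Rm_0_4, Rm_1_0, Rm_1_1, Rm_1_2, Rm_1_3, Rm_1_4, Rm_2_0, Rm_2_1, Rm_2_2, Rm_2_3, Rm_2_4, Rm_3_0, Rm_3_1, Rm_3_2, Rm_3_3, Rm_3_4, Rm_4_0, Rm_4_1, Rm_4_2, Rm_4_3, Rm_4_4, fL_5_0, fL_5_1, fL_5_2, fL_5_3, fL_5_4] at h_5_4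
  push_cast at h_5_4
  simp only [Fin.sum_univ_six]
  simp only [xv]
  simp only [fL_0_0, fL_0_1, fL_0_2, fL_0_3, fL_0_4, fL_1_0, fL_1_1, fL_1_2, fL_1_3, fL_1_4, fL_2_0, fL_2_1, fL_2_2, fL_2_3, fL_2_4, fL_3_0, fL_3_1, fL_3_2, fL_3_3, fL_3_4, fL_4_0, fL_4_1, fL_4_2, fL_4_3, fL_4_4, fL_5_0, fL_5_1, fL_5_2, fL_5_3, fL_5_4]
  simp only [hm1, one_pow, one_mul]
  set x0 := (χ ({0,1,2,3} : Finset (Fin 6))).1 with hdef0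
  set x1 := (χ ({0,1,2,4} : Finset (Fin 6))).1 with hdef1
  set x2 := (χ ({0,1,2,5} : Finset (Fin 6))).1 with hdef2
  set x3 := (χ ({0,1,3,4} : Finset (Fin 6))).1 with hdef3
  set x4 := (χ ({0,1,3,5} : Finset (Fin 6))).1 with hdef4
  set x5 := (χ ({0,1,4,5} : Finset (Fin 6))).1 with hdef5
  set x6 := (χ ({0,2,3,4} : Finset (Fin 6))).1 with hdef6
  set x7 := (χ ({0,2,3,5} : Finset (Fin 6))).1 with hdef7
  set x8 := (χ ({0,2,4,5} : Finset (Fin 6))).1 with hdef8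
  set x9 := (χ ({0,3,4,5} : Finset (Fin 6))).1 with hdef9
  set x10 := (χ ({1,2,3,4} : Finset (Fin 6))).1 with hdef10
  set x11 := (χ ({1,2,3,5} : Finset (Fin 6))).1 with hdef11
  set x12 := (χ ({1,2,4,5} : Finset (Fin 6))).1 with hdef12
  set x13 := (χ ({1,3,4,5} : Finset (Fin 6))).1 with hdef13
  set x14 := (χ ({2,3,4,5} : Finset (Fin 6))).1 with hdef14
  have hs0 : x0 = x5 + x9 + x10 := by linear_combination (h_5_2 - h_2_4) + ((-1)*x10 + (-1)*x9 + x6 + (-1)*x3 + x0) * h2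
  have hs1 : x1 = x5 + x6 + x8 + x10 := by linear_combination (h_5_3 - h_3_4) + ((-1)*x10 + (-1)*x8 + x6 + (-1)*x3 + x0) * h2
  have hs2 : x2 = x5 + x10 + x14 := by linear_combination (h_5_2 - h_2_4) + (h_4_1 - h_1_3) + ((-1)*x10 + (-2)*x9 + x8 + (-1)*x3 + x2) * h2
  have hs3 : x3 = x5 + x6 + x8 + x10 + x12 + x13 := by linear_combination (h_5_4 - h_4_4) + (h_4_3 - h_3_3) + (h_5_2 - h_2_4) + (h_4_2 - h_2_3) + ((-1)*x11 + (-1)*x10 + (-2)*x9 + (-2)*x8 + 2*x7 + x6 + 2*x5 + (-1)*x4 + (-2)*x3 + (-1)*x1 + 2*x0) * h2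
  have hs4 : x4 = x5 + x10 + x11 + x13 := by linear_combination (h_5_2 - h_2_4) + (h_4_2 - h_2_3) + ((-1)*x11 + (-1)*x10 + (-2)*x9 + x7 + x6 + x5 + (-2)*x3 + x0) * h2
  have hs7 : x7 = x8 + x11 + x12 := by linear_combination (h_4_3 - h_3_3) + ((-1)*x11 + (-2)*x8 + 2*x7 + x5 + (-1)*x4 + (-1)*x1 + x0) * h2
  rw [hs0, hs1, hs2, hs3, hs4, hs7]
  linear_combination (x13^4 + x12*x14^3 + x12^2*x14^2 + x12^3*x14 + x11*x14^3 + 3*x11*x13^3 + 2*x11*x12*x14^2 + 3*x11*x12^2*x14 + 2*x11^2*x14^2 + x11^2*x13*x14 + 2*x11^2*x13^2 + 3*x11^2*x12*x14 + 2*x11^3*x14 + x11^3*x13 + 3*x10*x13^3 + 3*x10*x12*x14^2 + 2*x10*x12^2*x14 + x10*x12^3 + 3*x10*x11*x14^2 + 5*x10*x11*x13^2 + 2*x10*x11*x12*x14 + 3*x10*x11*x12^2 + 3*x10*x11^2*x14 + 3*x10*x11^2*x13 + 3*x10*x11^2*x12 + 2*x10*x11^3 + 3*x10^2*x13^2 +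 3*x10^2*x12*x14 + 2*x10^2*x12*x13 + 2*x10^2*x12^2 + 3*x10^2*x11*x14 + 3*x10^2*x11*x13 + 3*x10^2*x11*x12 + 4*x10^2*x11^2 + 2*x10^3*x13 + 3*x10^3*x12 + 2*x10^3*x11 + 2*x10^4 + x9*x13^3 + x9*x12^2*x14 + x9*x12^3 + 3*x9*x11*x13^2 + 2*x9*x11*x12*x14 + 3*x9*x11*x12^2 + x9*x11^2*x14 + 3*x9*x11^2*x13 + 3*x9*x11^2*x12 + 2*x9*x11^3 + 3*x9*x10*x13^2 + 2*x9*x10*x12*x13 + 2*x9*x10*x12^2 + 6*x9*x10*x11*x13 + 4*x9*x10*x11*x12 + 5*x9*x10*x11^2 + 3*x9*x10^2*x13 + 2*x9*x10^2*x12 + 3*x9*x10^2*x11 + x9*x10^3 + x9^2*x13^2 + 2*x9^2*x12*x13 + x9^2*x12^2 + x9^2*x11*x13 + 2*x9^2*x11*x12 + x9^2*x11^2 + 2*x9^2*x10*x13 + 2*x9^2*x10*x12 + x9^2*x10*x11 + x9^2*x10^2 + x9^3*x13 + x9^3*x12 + x9^3*x11 + x9^3*x10 + x8*x14^3 + 2*x8*x12*x14^2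 + 3*x8*x12^2*x14 + 2*x8*x11*x14^2 + 6*x8*x11*x12*x14 + 3*x8*x11^2*x14 + 3*x8*x10*x14^2 + 2*x8*x10*x12*x14 + 3*x8*x10*x12^2 + 2*x8*x10*x11*x14 + 6*x8*x10*x11*x12 + 3*x8*x10*x11^2 + 3*x8*x10^2*x14 + 2*x8*x10^2*x13 + 4*x8*x10^2*x12 + 3*x8*x10^2*x11 + 6*x8*x10^3 + 2*x8*x9*x12*x14 + 3*x8*x9*x12^2 + 2*x8*x9*x11*x14 + 6*x8*x9*x11*x12 + 3*x8*x9*x11^2 + 2*x8*x9*x10*x13 + 4*x8*x9*x10*x12 + 4*x8*x9*x10*x11 + 2*x8*x9*x10^2 + 2*x8*x9^2*x13 + 2*x8*x9^2*x12 + 2*x8*x9^2*x11 + 2*x8*x9^2*x10 + x8*x9^3 + x8^2*x14^2 + 3*x8^2*x12*x14 + 3*x8^2*x11*x14 + x8^2*x10*x14 + 3*x8^2*x10*x12 + 3*x8^2*x10*x11 + 5*x8^2*x10^2 + x8^2*x9*x14 + 3*x8^2*x9*x12 + 3*x8^2*x9*x11 + 2*x8^2*x9*x10 + x8^2*x9^2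 + 2*x8^3*x14 + 4*x8^3*x10 + x8^3*x9 + x8^4 + 2*x6*x10^2*x13 + 2*x6*x10^2*x12 + 6*x6*x10^3 + 2*x6*x9*x10*x13 + 2*x6*x9*x10*x12 + 2*x6*x9*x10^2 + 2*x6*x9^2*x13 + 2*x6*x9^2*x12 + x6*x9^2*x11 + 2*x6*x9^2*x10 + x6*x9^3 + 9*x6*x8*x10^2 + 2*x6*x8*x9*x10 + 2*x6*x8*x9^2 + x6*x8^2*x14 + 5*x6*x8^2*x10 + 2*x6*x8^3 + 7*x6^2*x10^2 + 3*x6^2*x9*x10 + 2*x6^2*x9^2 + 6*x6^2*x8*x10 + x6^2*x8*x9 + 2*x6^2*x8^2 + 4*x6^3*x10 + x6^3*x9 + 2*x6^3*x8 + x6^4 + 3*x5*x13^3 + 3*x5*x12*x14^2 + 2*x5*x12^2*x14 + x5*x12^3 + 3*x5*x11*x14^2 + 5*x5*x11*x13^2 + 2*x5*x11*x12*x14 + 3*x5*x11*x12^2 + 3*x5*x11^2*x14 + 3*x5*x11^2*x13 + 3*x5*x11^2*x12 + 2*x5*x11^3 + 5*x5*x10*x13^2 + 6*x5*x10*x12*x14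 + 2*x5*x10*x12*x13 + 4*x5*x10*x12^2 + 6*x5*x10*x11*x14 + 6*x5*x10*x11*x13 + 6*x5*x10*x11*x12 + 8*x5*x10*x11^2 + 4*x5*x10^2*x13 + 7*x5*x10^2*x12 + 6*x5*x10^2*x11 + 5*x5*x10^3 + 3*x5*x9*x13^2 + 2*x5*x9*x12*x13 + 2*x5*x9*x12^2 + 6*x5*x9*x11*x13 + 4*x5*x9*x11*x12 + 5*x5*x9*x11^2 + 6*x5*x9*x10*x13 + 4*x5*x9*x10*x12 + 6*x5*x9*x10*x11 + 3*x5*x9*x10^2 + 2*x5*x9^2*x13 + 2*x5*x9^2*x12 + x5*x9^2*x11 + 2*x5*x9^2*x10 + x5*x9^3 + 3*x5*x8*x14^2 + 2*x5*x8*x12*x14 + 3*x5*x8*x12^2 + 2*x5*x8*x11*x14 + 6*x5*x8*x11*x12 + 3*x5*x8*x11^2 + 6*x5*x8*x10*x14 + 2*x5*x8*x10*x13 + 6*x5*x8*x10*x12 + 6*x5*x8*x10*x11 + 12*x5*x8*x10^2 + 2*x5*x8*x9*x13 + 4*x5*x8*x9*x12 + 4*x5*x8*x9*x11 + 4*x5*x8*x9*x10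 + 2*x5*x8*x9^2 + x5*x8^2*x14 + 3*x5*x8^2*x12 + 3*x5*x8^2*x11 + 7*x5*x8^2*x10 + 2*x5*x8^2*x9 + 4*x5*x8^3 + 2*x5*x6*x10*x13 + 2*x5*x6*x10*x12 + 11*x5*x6*x10^2 + 2*x5*x6*x9*x13 + 2*x5*x6*x9*x12 + 4*x5*x6*x9*x10 + 2*x5*x6*x9^2 + 10*x5*x6*x8*x10 + 2*x5*x6*x8*x9 + 4*x5*x6*x8^2 + 9*x5*x6^2*x10 + 3*x5*x6^2*x9 + 4*x5*x6^2*x8 + 3*x5*x6^3 + 3*x5^2*x13^2 + 3*x5^2*x12*x14 + x5^2*x12*x13 + 2*x5^2*x12^2 + 3*x5^2*x11*x14 + 3*x5^2*x11*x13 + 3*x5^2*x11*x12 + 4*x5^2*x11^2 + 3*x5^2*x10*x13 + 6*x5^2*x10*x12 + 6*x5^2*x10*x11 + 4*x5^2*x10^2 + 3*x5^2*x9*x13 + 2*x5^2*x9*x12 + 3*x5^2*x9*x11 + 3*x5^2*x9*x10 + x5^2*x9^2 + 3*x5^2*x8*x14 + x5^2*x8*x13 + 3*x5^2*x8*x12 +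 3*x5^2*x8*x11 + 8*x5^2*x8*x10 + 2*x5^2*x8*x9 + 3*x5^2*x8^2 + x5^2*x6*x13 + x5^2*x6*x12 + 6*x5^2*x6*x10 + 2*x5^2*x6*x9 + 3*x5^2*x6*x8 + 3*x5^2*x6^2 + x5^3*x13 + 2*x5^3*x12 + 2*x5^3*x11 + x5^3*x10 + x5^3*x9 + 2*x5^3*x8 + x5^3*x6) * h2
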